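/- arXiv:2411.11301 — 4 statements merged into one kernel-verified Lean document; each statement's English description precedes it below -/
import Mathlib

section
/- Let V = σ_e² (I_N ⊗ I_2 ⊗ I_n ⊗ I_{N₁}) + σ₃² (I_N ⊗ J_2 ⊗ J_n ⊗ J_{N₁}) + σ₂² (I_N ⊗ I_2 ⊗ J_n ⊗ J_{N₁}) + σ₁² (I_N ⊗ I_2 ⊗ I_n ⊗ J_{N₁}), with σ_e² > 0 and σ₁², σ₂², σ₃² ≥ 0. Define λ₀ = σ_e², λ₁ = σ_e² + N₁σ₁², λ₂ = σ_e² + N₁σ₁² + nN₁σ₂², λ₃ = σ_e² + N₁σ₁² + nN₁σ₂² + 2nN₁σ₃². Then V is invertible and V⁻¹ = (1/λ₀) I_N ⊗ I_2 ⊗ I_n ⊗ C_{N₁} + (1/λ₁) I_N ⊗ I_2 ⊗ C_n ⊗ J̄_{N₁} + (1/λ₂) I_N ⊗ C_2 ⊗ J̄_n ⊗ J̄_{N₁} + (1/λ₃) I_N ⊗ J̄_2 ⊗ J̄_n ⊗ J̄_{N₁}. -/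
open Matrix
open scoped Kronecker

noncomputable def Jmat (a : ℕ) : Matrix (Fin a) (Fin a) ℝ := fun _ _ => 1

noncomputable def Jbar (a : ℕ) : Matrix (Fin a) (Fin a) ℝ := (a : ℝ)⁻¹ • Jmat a

noncomputable def Cmat (a : ℕ) : Matrix (Fin a) (Fin a) ℝ :=
  (1 : Matrix (Fin a) (Fin a) ℝ) - Jbar a

lemma J_mul_J (a : ℕ) : Jmat a * Jmat a = (a:ℝ) • Jmat a := by
  ext i j
  simp [Matrix.mul_apply, Jmat, Finset.sum_const]

lemma Jbar_mul_Jbar {a : ℕ} (ha : 0 < a) : Jbar a * Jbar a = Jbar a := by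
  have h : (a:ℝ) ≠ 0 := Nat.cast_ne_zero.mpr ha.ne'
  simp only [Jbar, smul_mul_assoc, mul_smul_comm, J_mul_J, smul_smul]
  congr 1
  field_simp

lemma Cmat_mul_Cmat {a : ℕ} (ha : 0 < a) : Cmat a * Cmat a = Cmat a := by
  simp [Cmat, sub_mul, mul_sub, Jbar_mul_Jbar ha]

lemma Cmat_mul_Jbar {a : ℕ} (ha : 0 < a) : Cmat a * Jbar a = 0 := by
  simp [Cmat, sub_mul, Jbar_mul_Jbar ha]

lemma Jbar_mul_Cmat {a : ℕ} (ha : 0 < a) : Jbar a * Cmat a = 0 := by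
  simp [Cmat, mul_sub, Jbar_mul_Jbar ha]

lemma Cmat_add_Jbar (a : ℕ) : Cmat a + Jbar a = 1 := by simp [Cmat]

lemma sub_kronecker' {l m n p : Type*} (A B : Matrix l m ℝ) (C : Matrix n p ℝ) :
    (A - B) ⊗ₖ C = A ⊗ₖ C - B ⊗ₖ C := by
  ext ⟨i, j⟩ ⟨k, r⟩
  simp [Matrix.kroneckerMap_apply, sub_mul]

lemma kronecker_sub' {l m n p : Type*} (A : Matrix l m ℝ) (B C : Matrix n p ℝ) :
    A ⊗ₖ (B - C) = A ⊗ₖ B - A ⊗ₖ C := by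
  ext ⟨i, j⟩ ⟨k, r⟩
  simp [Matrix.kroneckerMap_apply, mul_sub]

noncomputable def Qm (N n N₁ : ℕ) (X : Matrix (Fin 2) (Fin 2) ℝ)
    (Y : Matrix (Fin n) (Fin n) ℝ) (Z : Matrix (Fin N₁) (Fin N₁) ℝ) :
    Matrix (((Fin N × Fin 2) × Fin n) × Fin N₁) (((Fin N × Fin 2) × Fin n) × Fin N₁) ℝ :=
  (((1 : Matrix (Fin N) (Fin N) ℝ) ⊗ₖ X) ⊗ₖ Y) ⊗ₖ Z

lemma Qm_mul (N n N₁ : ℕ) (X X' : Matrix (Fin 2) (Fin 2) ℝ)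
    (Y Y' : Matrix (Fin n) (Fin n) ℝ) (Z Z' : Matrix (Fin N₁) (Fin N₁) ℝ) :
    Qm N n N₁ X Y Z * Qm N n N₁ X' Y' Z' = Qm N n N₁ (X * X') (Y * Y') (Z * Z') := by
  simp [Qm, ← Matrix.mul_kronecker_mul]

lemma Qm_zero₁ (N n N₁ : ℕ) (Y : Matrix (Fin n) (Fin n) ℝ) (Z : Matrix (Fin N₁) (Fin N₁) ℝ) :
    Qm N n N₁ 0 Y Z = 0 := by simp [Qm]

lemma Qm_zero₂ (N n N₁ : ℕ) (X : Matrix (Fin 2) (Fin 2) ℝ) (Z : Matrix (Fin N₁) (Fin N₁) ℝ) :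
    Qm N n N₁ X 0 Z = 0 := by simp [Qm]

lemma Qm_zero₃ (N n N₁ : ℕ) (X : Matrix (Fin 2) (Fin 2) ℝ) (Y : Matrix (Fin n) (Fin n) ℝ) :
    Qm N n N₁ X Y 0 = 0 := by simp [Qm]

lemma Qm_add₁ (N n N₁ : ℕ) (X X' : Matrix (Fin 2) (Fin 2) ℝ)
    (Y : Matrix (Fin n) (Fin n) ℝ) (Z : Matrix (Fin N₁) (Fin N₁) ℝ) :
    Qm N n N₁ (X + X') Y Z = Qm N n N₁ X Y Z + Qm N n N₁ X' Y Z := by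
  simp [Qm, Matrix.kronecker_add, Matrix.add_kronecker]

lemma Qm_add₂ (N n N₁ : ℕ) (X : Matrix (Fin 2) (Fin 2) ℝ)
    (Y Y' : Matrix (Fin n) (Fin n) ℝ) (Z : Matrix (Fin N₁) (Fin N₁) ℝ) :
    Qm N n N₁ X (Y + Y') Z = Qm N n N₁ X Y Z + Qm N n N₁ X Y' Z := by
  simp [Qm, Matrix.kronecker_add, Matrix.add_kronecker]

lemma Qm_add₃ (N n N₁ : ℕ) (X : Matrix (Fin 2) (Fin 2) ℝ)
    (Y : Matrix (Fin n) (Fin n) ℝ) (Z Z' : Matrix (Fin N₁) (Fin N₁) ℝ) :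
    Qm N n N₁ X Y (Z + Z') = Qm N n N₁ X Y Z + Qm N n N₁ X Y Z' := by
  simp [Qm, Matrix.kronecker_add]

lemma Qm_one (N n N₁ : ℕ) : Qm N n N₁ 1 1 1 = 1 := by
  simp [Qm]

/-- The covariance matrix
`V = σ_e² (I_N ⊗ I_2 ⊗ I_n ⊗ I_{N₁}) + σ₃² (I_N ⊗ J_2 ⊗ J_n ⊗ J_{N₁})
   + σ₂² (I_N ⊗ I_2 ⊗ J_n ⊗ J_{N₁}) + σ₁² (I_N ⊗ I_2 ⊗ I_n ⊗ J_{N₁})`. -/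
noncomputable def Vmat (N n N₁ : ℕ) (σe2 σ12 σ22 σ32 : ℝ) :
    Matrix (((Fin N × Fin 2) × Fin n) × Fin N₁) (((Fin N × Fin 2) × Fin n) × Fin N₁) ℝ :=
  σe2 • ((((1 : Matrix (Fin N) (Fin N) ℝ) ⊗ₖ (1 : Matrix (Fin 2) (Fin 2) ℝ)) ⊗ₖ
            (1 : Matrix (Fin n) (Fin n) ℝ)) ⊗ₖ (1 : Matrix (Fin N₁) (Fin N₁) ℝ))
  + σ32 • ((((1 : Matrix (Fin N) (Fin N) ℝ) ⊗ₖ Jmat 2) ⊗ₖ Jmat n) ⊗ₖ Jmat N₁)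
  + σ22 • ((((1 : Matrix (Fin N) (Fin N) ℝ) ⊗ₖ (1 : Matrix (Fin 2) (Fin 2) ℝ)) ⊗ₖ
            Jmat n) ⊗ₖ Jmat N₁)
  + σ12 • ((((1 : Matrix (Fin N) (Fin N) ℝ) ⊗ₖ (1 : Matrix (Fin 2) (Fin 2) ℝ)) ⊗ₖ
            (1 : Matrix (Fin n) (Fin n) ℝ)) ⊗ₖ Jmat N₁)

/-- `V` is invertible, and its inverse is
`(1/λ₀) I_N ⊗ I_2 ⊗ I_n ⊗ C_{N₁} + (1/λ₁) I_N ⊗ I_2 ⊗ C_n ⊗ J̄_{N₁}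
 + (1/λ₂) I_N ⊗ C_2 ⊗ J̄_n ⊗ J̄_{N₁} + (1/λ₃) I_N ⊗ J̄_2 ⊗ J̄_n ⊗ J̄_{N₁}`. -/
theorem V_inverse (N n N₁ : ℕ) (hN : 0 < N) (hn : 0 < n) (hN₁ : 0 < N₁)
    (σe2 σ12 σ22 σ32 : ℝ) (hσe : 0 < σe2) (h1 : 0 ≤ σ12) (h2 : 0 ≤ σ22) (h3 : 0 ≤ σ32)
    (l0 l1 l2 l3 : ℝ)
    (hl0 : l0 = σe2) (hl1 : l1 = σe2 + N₁ * σ12)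
    (hl2 : l2 = σe2 + N₁ * σ12 + n * N₁ * σ22)
    (hl3 : l3 = σe2 + N₁ * σ12 + n * N₁ * σ22 + 2 * n * N₁ * σ32) :
    IsUnit (Vmat N n N₁ σe2 σ12 σ22 σ32) ∧
    (Vmat N n N₁ σe2 σ12 σ22 σ32)⁻¹ =
      (1 / l0) • ((((1 : Matrix (Fin N) (Fin N) ℝ) ⊗ₖ (1 : Matrix (Fin 2) (Fin 2) ℝ)) ⊗ₖ
            (1 : Matrix (Fin n) (Fin n) ℝ)) ⊗ₖ Cmat N₁)
      + (1 / l1) • ((((1 : Matrix (Fin N) (Fin N) ℝ) ⊗ₖ (1 : Matrix (Fin 2) (Fin 2) ℝ)) ⊗ₖ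
            Cmat n) ⊗ₖ Jbar N₁)
      + (1 / l2) • ((((1 : Matrix (Fin N) (Fin N) ℝ) ⊗ₖ Cmat 2) ⊗ₖ Jbar n) ⊗ₖ Jbar N₁)
      + (1 / l3) • ((((1 : Matrix (Fin N) (Fin N) ℝ) ⊗ₖ Jbar 2) ⊗ₖ Jbar n) ⊗ₖ Jbar N₁) := by
  rw [hl0, hl1, hl2, hl3]
  have h2' : (0:ℕ) < 2 := by norm_num
  have hN₁' : (N₁:ℝ) ≠ 0 := Nat.cast_ne_zero.mpr hN₁.ne'
  have hn' : (n:ℝ) ≠ 0 := Nat.cast_ne_zero.mpr hn.ne'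
  have e0 : σe2 ≠ 0 := hσe.ne'
  have e1 : σe2 + N₁ * σ12 ≠ 0 := by positivity
  have e2 : σe2 + N₁ * σ12 + n * N₁ * σ22 ≠ 0 := by positivity
  have e3 : σe2 + N₁ * σ12 + n * N₁ * σ22 + 2 * n * N₁ * σ32 ≠ 0 := by positivity
  have hq : Qm N n N₁ 1 1 (Cmat N₁) + Qm N n N₁ 1 (Cmat n) (Jbar N₁)
      + Qm N n N₁ (Cmat 2) (Jbar n) (Jbar N₁) + Qm N n N₁ (Jbar 2) (Jbar n) (Jbar N₁) = 1 := by
    rw [add_assoc, add_assoc, ← Qm_add₁, Cmat_add_Jbar, ← Qm_add₂, Cmat_add_Jbar,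
      ← Qm_add₃, Cmat_add_Jbar, Qm_one]
  have hV : Vmat N n N₁ σe2 σ12 σ22 σ32 =
      σe2 • Qm N n N₁ 1 1 (Cmat N₁)
      + (σe2 + N₁ * σ12) • Qm N n N₁ 1 (Cmat n) (Jbar N₁)
      + (σe2 + N₁ * σ12 + n * N₁ * σ22) • Qm N n N₁ (Cmat 2) (Jbar n) (Jbar N₁)
      + (σe2 + N₁ * σ12 + n * N₁ * σ22 + 2 * n * N₁ * σ32) •
          Qm N n N₁ (Jbar 2) (Jbar n) (Jbar N₁) := by
    simp only [Vmat, Qm, Cmat, Jbar, kronecker_sub', sub_kronecker',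
      Matrix.kronecker_smul, Matrix.smul_kronecker]
    match_scalars <;> field_simp <;> ring
  have hVW : Vmat N n N₁ σe2 σ12 σ22 σ32 *
      ((1 / σe2) • Qm N n N₁ 1 1 (Cmat N₁)
      + (1 / (σe2 + N₁ * σ12)) • Qm N n N₁ 1 (Cmat n) (Jbar N₁)
      + (1 / (σe2 + N₁ * σ12 + n * N₁ * σ22)) • Qm N n N₁ (Cmat 2) (Jbar n) (Jbar N₁)
      + (1 / (σe2 + N₁ * σ12 + n * N₁ * σ22 + 2 * n * N₁ * σ32)) •
          Qm N n N₁ (Jbar 2) (Jbar n) (Jbar N₁)) = 1 := by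
    rw [hV]
    simp only [add_mul, mul_add, smul_mul_assoc, mul_smul_comm, Qm_mul, one_mul, mul_one,
      Cmat_mul_Cmat hN₁, Cmat_mul_Cmat hn, Cmat_mul_Cmat h2',
      Cmat_mul_Jbar hN₁, Cmat_mul_Jbar hn, Cmat_mul_Jbar h2',
      Jbar_mul_Cmat hN₁, Jbar_mul_Cmat hn, Jbar_mul_Cmat h2',
      Jbar_mul_Jbar hN₁, Jbar_mul_Jbar hn, Jbar_mul_Jbar h2',
      Qm_zero₁, Qm_zero₂, Qm_zero₃, smul_zero, add_zero, zero_add, smul_smul]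
    rw [← hq]
    match_scalars <;> field_simp
  have hWV := mul_eq_one_comm.mp hVW
  exact ⟨⟨⟨_, _, hVW, hWV⟩, rfl⟩, Matrix.inv_eq_right_inv hVW⟩
end

section
/- With V as in the previous context, the eigenvalues of V are exactly λ₀ = σ_e² with multiplicity 2N·n·(N₁−1), λ₁ = σ_e² + N₁σ₁² with multiplicity 2N·(n−1), λ₂ = σ_e² + N₁σ₁² + nN₁σ₂² with multiplicity N, and λ₃ = σ_e² + N₁σ₁² + nN₁σ₂² + 2nN₁σ₃² with multiplicity N (where the total size is 2N·n·N₁). Equivalently, V = λ₀ P₀ + λ₁ P₁ + λ₂ P₂ + λ₃ P₃ for the orthogonal projections Pᵢ defined earlier. -/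
open Matrix
open scoped Kronecker

noncomputable def Pmat (N n N₁ : ℕ) :
    Fin 4 → Matrix (((Fin N × Fin 2) × Fin n) × Fin N₁) (((Fin N × Fin 2) × Fin n) × Fin N₁) ℝ
  | 0 => (((1 : Matrix (Fin N) (Fin N) ℝ) ⊗ₖ (1 : Matrix (Fin 2) (Fin 2) ℝ)) ⊗ₖ
            (1 : Matrix (Fin n) (Fin n) ℝ)) ⊗ₖ Cmat N₁
  | 1 => (((1 : Matrix (Fin N) (Fin N) ℝ) ⊗ₖ (1 : Matrix (Fin 2) (Fin 2) ℝ)) ⊗ₖ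
            Cmat n) ⊗ₖ Jbar N₁
  | 2 => (((1 : Matrix (Fin N) (Fin N) ℝ) ⊗ₖ Cmat 2) ⊗ₖ Jbar n) ⊗ₖ Jbar N₁
  | 3 => (((1 : Matrix (Fin N) (Fin N) ℝ) ⊗ₖ Jbar 2) ⊗ₖ Jbar n) ⊗ₖ Jbar N₁

lemma trace_Jbar (a : ℕ) (ha : 0 < a) : (Jbar a).trace = 1 := by
  simp [Jbar, Jmat, Matrix.trace, Matrix.diag]
  field_simp

lemma trace_Cmat (a : ℕ) (ha : 0 < a) : (Cmat a).trace = (a : ℝ) - 1 := by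
  simp [Cmat, Matrix.trace_sub, trace_Jbar a ha, Matrix.trace_one]

/-- Spectral decomposition of `V`: `V = λ₀P₀ + λ₁P₁ + λ₂P₂ + λ₃P₃` for the
orthogonal projections `Pᵢ`, whose ranks (traces) give the multiplicities
`2N·n·(N₁−1)`, `2N·(n−1)`, `N`, `N` of the eigenvalues `λ₀, λ₁, λ₂, λ₃`. -/
theorem V_eigen_decomposition (N n N₁ : ℕ) (hN : 0 < N) (hn : 0 < n) (hN₁ : 0 < N₁)
    (σe2 σ12 σ22 σ32 : ℝ) (hσe : 0 < σe2) (h1 : 0 ≤ σ12) (h2 : 0 ≤ σ22) (h3 : 0 ≤ σ32)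
    (l0 l1 l2 l3 : ℝ)
    (hl0 : l0 = σe2) (hl1 : l1 = σe2 + N₁ * σ12)
    (hl2 : l2 = σe2 + N₁ * σ12 + n * N₁ * σ22)
    (hl3 : l3 = σe2 + N₁ * σ12 + n * N₁ * σ22 + 2 * n * N₁ * σ32) :
    Vmat N n N₁ σe2 σ12 σ22 σ32 =
      l0 • Pmat N n N₁ 0 + l1 • Pmat N n N₁ 1 + l2 • Pmat N n N₁ 2 + l3 • Pmat N n N₁ 3 ∧
    (Pmat N n N₁ 0).trace = 2 * N * n * ((N₁ : ℝ) - 1) ∧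
    (Pmat N n N₁ 1).trace = 2 * N * ((n : ℝ) - 1) ∧
    (Pmat N n N₁ 2).trace = (N : ℝ) ∧
    (Pmat N n N₁ 3).trace = (N : ℝ) := by
  have hn' : (n : ℝ) ≠ 0 := Nat.cast_ne_zero.mpr hn.ne'
  have hN₁' : (N₁ : ℝ) ≠ 0 := Nat.cast_ne_zero.mpr hN₁.ne'
  refine ⟨?_, ?_, ?_, ?_, ?_⟩
  · subst hl0 hl1 hl2 hl3
    ext ⟨⟨⟨i1, i2⟩, i3⟩, i4⟩ ⟨⟨⟨j1, j2⟩, j3⟩, j4⟩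
    simp only [Vmat, Pmat, Jmat, Jbar, Cmat, Matrix.add_apply, Matrix.smul_apply,
      Matrix.kroneckerMap_apply, Matrix.sub_apply, Matrix.one_apply, smul_eq_mul,
      Matrix.smul_apply]
    by_cases e1 : i1 = j1 <;> by_cases e2 : i2 = j2 <;> by_cases e3 : i3 = j3 <;>
      by_cases e4 : i4 = j4 <;>
      simp [e1, e2, e3, e4] <;> field_simp <;> ring
  · simp only [Pmat, Matrix.trace_kronecker, trace_Cmat N₁ hN₁, Matrix.trace_one,
      Fintype.card_fin]
    push_cast; ring
  · simp only [Pmat, Matrix.trace_kronecker, trace_Cmat n hn, trace_Jbar N₁ hN₁,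
      Matrix.trace_one, Fintype.card_fin]
    push_cast; ring
  · simp only [Pmat, Matrix.trace_kronecker, trace_Cmat 2 (by norm_num), trace_Jbar n hn,
      trace_Jbar N₁ hN₁, Matrix.trace_one, Fintype.card_fin]
    push_cast; ring
  · simp only [Pmat, Matrix.trace_kronecker, trace_Jbar 2 (by norm_num), trace_Jbar n hn,
      trace_Jbar N₁ hN₁, Matrix.trace_one, Fintype.card_fin]
    push_cast; ring
end

section
/- With V and λᵢ as above and Z₁ = I_N ⊗ 1_2 ⊗ 1_n ⊗ 1_{N₁}, the trace of V⁻¹ Z₁ Z₁ᵀ equals (1/λ₃) · N · 2n N₁. -/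
open Matrix
open scoped Kronecker

/-- The all-ones column vector `1_a`, as an `a × 1` matrix. -/
noncomputable def onesCol (a : ℕ) : Matrix (Fin a) (Fin 1) ℝ := fun _ _ => 1

/-- The design matrix `Z₁ = I_N ⊗ 1_2 ⊗ 1_n ⊗ 1_{N₁}`. -/
noncomputable def Z1 (N n N₁ : ℕ) :
    Matrix (((Fin N × Fin 2) × Fin n) × Fin N₁) (((Fin N × Fin 1) × Fin 1) × Fin 1) ℝ :=
  (((1 : Matrix (Fin N) (Fin N) ℝ) ⊗ₖ onesCol 2) ⊗ₖ onesCol n) ⊗ₖ onesCol N₁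

lemma kron_transpose {l m n p : Type*} (A : Matrix l m ℝ) (B : Matrix n p ℝ) :
    (A ⊗ₖ B)ᵀ = Aᵀ ⊗ₖ Bᵀ := (kroneckerMap_transpose _ _ _).symm

lemma ones_mul_ones_transpose (a : ℕ) : onesCol a * (onesCol a)ᵀ = Jmat a := by
  ext i j; simp [Matrix.mul_apply, onesCol, Jmat]

lemma Jmat_mul_Jmat (a : ℕ) : Jmat a * Jmat a = (a : ℝ) • Jmat a := by
  ext i j; simp [Matrix.mul_apply, Jmat]

lemma Jmat_trace (a : ℕ) : (Jmat a).trace = (a : ℝ) := by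
  simp [Matrix.trace, Jmat]

lemma psd_smul {m : Type*} [Fintype m] {A : Matrix m m ℝ} (hA : A.PosSemidef) {c : ℝ}
    (hc : 0 ≤ c) : (c • A).PosSemidef := by
  refine ⟨?_, fun x => ?_⟩
  · unfold Matrix.IsHermitian
    rw [conjTranspose_smul, hA.1.eq]; simp
  · convert mul_nonneg hc (hA.2 x) using 1
    unfold Finsupp.sum
    rw [Finset.mul_sum]
    refine Finset.sum_congr rfl fun i _ => ?_
    rw [Finset.mul_sum]
    refine Finset.sum_congr rfl fun j _ => ?_
    simp only [Matrix.smul_apply, smul_eq_mul]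
    ring

lemma psd_mul_transpose {m p : Type*} [Fintype m] [Fintype p] (A : Matrix m p ℝ) :
    (A * Aᵀ).PosSemidef := by
  have := Matrix.posSemidef_self_mul_conjTranspose A
  rwa [conjTranspose_eq_transpose_of_trivial] at this

lemma posDef_smul_one {m : Type*} [Fintype m] [DecidableEq m] {c : ℝ} (hc : 0 < c) :
    (c • (1 : Matrix m m ℝ)).PosDef := by
  have h : c • (1 : Matrix m m ℝ) = diagonal (fun _ => c) := by
    ext i j
    by_cases h : i = j <;> simp [h, Matrix.one_apply, Matrix.diagonal_apply]
  rw [h]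
  exact Matrix.PosDef.diagonal (fun _ => hc)

/-- `tr(V⁻¹ Z₁ Z₁ᵀ) = (1/λ₃) · N · 2nN₁`. -/
theorem trace_Vinv_Z1 (N n N₁ : ℕ) (hN : 0 < N) (hn : 0 < n) (hN₁ : 0 < N₁)
    (σe2 σ12 σ22 σ32 : ℝ) (hσe : 0 < σe2) (h1 : 0 ≤ σ12) (h2 : 0 ≤ σ22) (h3 : 0 ≤ σ32)
    (l3 : ℝ) (hl3 : l3 = σe2 + N₁ * σ12 + n * N₁ * σ22 + 2 * n * N₁ * σ32) :
    ((Vmat N n N₁ σe2 σ12 σ22 σ32)⁻¹ * (Z1 N n N₁ * (Z1 N n N₁)ᵀ)).trace =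
      (1 / l3) * N * (2 * n * N₁) := by
  set K : Matrix (((Fin N × Fin 2) × Fin n) × Fin N₁) (((Fin N × Fin 2) × Fin n) × Fin N₁) ℝ :=
    (((1 : Matrix (Fin N) (Fin N) ℝ) ⊗ₖ Jmat 2) ⊗ₖ Jmat n) ⊗ₖ Jmat N₁ with hK
  -- Z1 Z1ᵀ = K
  have hP : Z1 N n N₁ * (Z1 N n N₁)ᵀ = K := by
    rw [Z1, kron_transpose, kron_transpose, kron_transpose, transpose_one,
      ← Matrix.mul_kronecker_mul, ← Matrix.mul_kronecker_mul, ← Matrix.mul_kronecker_mul,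
      Matrix.one_mul, ones_mul_ones_transpose, ones_mul_ones_transpose,
      ones_mul_ones_transpose]
  -- V * K = l3 • K
  have hVK : Vmat N n N₁ σe2 σ12 σ22 σ32 * K = l3 • K := by
    rw [Vmat, hK]
    simp only [Matrix.add_mul, Matrix.smul_mul, ← Matrix.mul_kronecker_mul, Matrix.one_mul,
      Jmat_mul_Jmat, Matrix.kronecker_smul, Matrix.smul_kronecker, hl3]
    push_cast
    module
  -- positive definiteness of V
  have hVpd : (Vmat N n N₁ σe2 σ12 σ22 σ32).PosDef := by
    rw [Vmat]
    have hpd : (σe2 • ((((1 : Matrix (Fin N) (Fin N) ℝ) ⊗ₖ (1 : Matrix (Fin 2) (Fin 2) ℝ)) ⊗ₖ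
        (1 : Matrix (Fin n) (Fin n) ℝ)) ⊗ₖ (1 : Matrix (Fin N₁) (Fin N₁) ℝ))).PosDef := by
      rw [Matrix.one_kronecker_one, Matrix.one_kronecker_one, Matrix.one_kronecker_one]
      exact posDef_smul_one hσe
    have hK3 : ((((1 : Matrix (Fin N) (Fin N) ℝ) ⊗ₖ Jmat 2) ⊗ₖ Jmat n) ⊗ₖ Jmat N₁).PosSemidef := by
      rw [← hK, ← hP]; exact psd_mul_transpose _
    have hK2 : ((((1 : Matrix (Fin N) (Fin N) ℝ) ⊗ₖ (1 : Matrix (Fin 2) (Fin 2) ℝ)) ⊗ₖ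
        Jmat n) ⊗ₖ Jmat N₁).PosSemidef := by
      have : (((1 : Matrix (Fin N) (Fin N) ℝ) ⊗ₖ (1 : Matrix (Fin 2) (Fin 2) ℝ)) ⊗ₖ
          Jmat n) ⊗ₖ Jmat N₁ =
          ((((1 : Matrix (Fin N) (Fin N) ℝ) ⊗ₖ (1 : Matrix (Fin 2) (Fin 2) ℝ)) ⊗ₖ onesCol n) ⊗ₖ
            onesCol N₁) *
          ((((1 : Matrix (Fin N) (Fin N) ℝ) ⊗ₖ (1 : Matrix (Fin 2) (Fin 2) ℝ)) ⊗ₖ onesCol n) ⊗ₖ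
            onesCol N₁)ᵀ := by
        rw [kron_transpose, kron_transpose, kron_transpose, transpose_one, transpose_one,
          ← Matrix.mul_kronecker_mul, ← Matrix.mul_kronecker_mul, ← Matrix.mul_kronecker_mul,
          Matrix.one_mul, Matrix.one_mul, ones_mul_ones_transpose, ones_mul_ones_transpose]
      rw [this]; exact psd_mul_transpose _
    have hK1 : ((((1 : Matrix (Fin N) (Fin N) ℝ) ⊗ₖ (1 : Matrix (Fin 2) (Fin 2) ℝ)) ⊗ₖ
        (1 : Matrix (Fin n) (Fin n) ℝ)) ⊗ₖ Jmat N₁).PosSemidef := by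
      have : (((1 : Matrix (Fin N) (Fin N) ℝ) ⊗ₖ (1 : Matrix (Fin 2) (Fin 2) ℝ)) ⊗ₖ
          (1 : Matrix (Fin n) (Fin n) ℝ)) ⊗ₖ Jmat N₁ =
          ((((1 : Matrix (Fin N) (Fin N) ℝ) ⊗ₖ (1 : Matrix (Fin 2) (Fin 2) ℝ)) ⊗ₖ
            (1 : Matrix (Fin n) (Fin n) ℝ)) ⊗ₖ onesCol N₁) *
          ((((1 : Matrix (Fin N) (Fin N) ℝ) ⊗ₖ (1 : Matrix (Fin 2) (Fin 2) ℝ)) ⊗ₖ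
            (1 : Matrix (Fin n) (Fin n) ℝ)) ⊗ₖ onesCol N₁)ᵀ := by
        rw [kron_transpose, kron_transpose, kron_transpose, transpose_one, transpose_one,
          transpose_one, ← Matrix.mul_kronecker_mul, ← Matrix.mul_kronecker_mul,
          ← Matrix.mul_kronecker_mul, Matrix.one_mul, Matrix.one_mul, Matrix.one_mul,
          ones_mul_ones_transpose]
      rw [this]; exact psd_mul_transpose _
    exact ((hpd.add_posSemidef (psd_smul hK3 h3)).add_posSemidef
      (psd_smul hK2 h2)).add_posSemidef (psd_smul hK1 h1)
  have hl3pos : 0 < l3 := by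
    rw [hl3]
    have : (0:ℝ) ≤ (N₁ : ℝ) * σ12 + (n : ℝ) * (N₁ : ℝ) * σ22 + 2 * (n : ℝ) * (N₁ : ℝ) * σ32 := by
      positivity
    linarith
  have hdet : IsUnit (Vmat N n N₁ σe2 σ12 σ22 σ32).det :=
    isUnit_iff_ne_zero.mpr hVpd.det_pos.ne'
  have hinv : (Vmat N n N₁ σe2 σ12 σ22 σ32)⁻¹ * K = (1 / l3) • K := by
    have h2 : K = l3 • ((Vmat N n N₁ σe2 σ12 σ22 σ32)⁻¹ * K) := by
      calc K = (Vmat N n N₁ σe2 σ12 σ22 σ32)⁻¹ * (Vmat N n N₁ σe2 σ12 σ22 σ32) * K := by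
              rw [Matrix.nonsing_inv_mul _ hdet, Matrix.one_mul]
        _ = (Vmat N n N₁ σe2 σ12 σ22 σ32)⁻¹ * (Vmat N n N₁ σe2 σ12 σ22 σ32 * K) := by
              rw [Matrix.mul_assoc]
        _ = l3 • ((Vmat N n N₁ σe2 σ12 σ22 σ32)⁻¹ * K) := by
              rw [hVK, Matrix.mul_smul]
    calc (Vmat N n N₁ σe2 σ12 σ22 σ32)⁻¹ * K
        = (1 / l3) • (l3 • ((Vmat N n N₁ σe2 σ12 σ22 σ32)⁻¹ * K)) := by
          rw [smul_smul, one_div, inv_mul_cancel₀ hl3pos.ne', one_smul]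
      _ = (1 / l3) • K := by rw [← h2]
  rw [hP, hinv, Matrix.trace_smul, hK, Matrix.trace_kronecker, Matrix.trace_kronecker,
    Matrix.trace_kronecker, Matrix.trace_one, Jmat_trace, Jmat_trace, Jmat_trace]
  simp only [smul_eq_mul, Fintype.card_fin]
  push_cast
  ring
end

section
/- In the setting of the previous statement, assuming u_i ~ N(0, σ₃²), u_{g(i)} ~ N(0, σ₂²), u_{j(ig)} ~ N(0, σ₁²), ε_{igjk} ~ N(0, σ_e²), all mutually independent across all indices, the variance of δ̂ = (Ȳᵀ_{·1··} − Ȳᶜ_{·1··}) − (Ȳᵀ_{·2··} − Ȳᶜ_{·2··}) equals (4 / (N₃ n N₁)) · (σ_e² + N₁ σ₁² + n N₁ σ₂²). -/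
open MeasureTheory

lemma helper_sum_mul {Ω ι κ : Type*} [MeasurableSpace Ω] (μ : Measure Ω)
    [Fintype ι] [Fintype κ] (f : ι → Ω → ℝ) (g : κ → Ω → ℝ)
    (h : ∀ a b, Integrable (fun ω => f a ω * g b ω) μ) :
    Integrable (fun ω => (∑ a, f a ω) * (∑ b, g b ω)) μ ∧
    ∫ ω, (∑ a, f a ω) * (∑ b, g b ω) ∂μ = ∑ a, ∑ b, ∫ ω, f a ω * g b ω ∂μ := by
  have hfun : (fun ω => (∑ a, f a ω) * (∑ b, g b ω)) =
      fun ω => ∑ a, ∑ b, f a ω * g b ω := by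
    funext ω; rw [Finset.sum_mul_sum]
  constructor
  · rw [hfun]
    exact integrable_finset_sum _ fun a _ => integrable_finset_sum _ fun b _ => h a b
  · rw [hfun, integral_finset_sum _ fun a _ => integrable_finset_sum _ fun b _ => h a b]
    exact Finset.sum_congr rfl fun a _ => integral_finset_sum _ fun b _ => h a b

lemma count_ite (N₃ : ℕ) (a b : ℝ) :
    ∑ i : Fin (2*N₃), (if (i:ℕ) < N₃ then a else b) = N₃ * a + N₃ * b := by
  rw [Fin.sum_univ_eq_sum_range (fun i => if i < N₃ then a else b), Finset.sum_ite,
    Finset.sum_const, Finset.sum_const]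
  have h1 : (Finset.range (2*N₃)).filter (fun i => i < N₃) = Finset.range N₃ := by
    ext i; simp; omega
  have h2 : ((Finset.range (2*N₃)).filter (fun i => ¬ i < N₃)).card = N₃ := by
    have := Finset.card_filter_add_card_filter_not
      (s := Finset.range (2*N₃)) (p := fun i => i < N₃)
    simp only [h1, Finset.card_range] at this
    omega
  rw [h1, h2, Finset.card_range]
  simp [nsmul_eq_mul]

set_option maxHeartbeats 1000000 in
/-- In the balanced three-level CRT model with subgrouping at level two and
mutually independent Gaussian random components `u_i ~ N(0,σ₃²)`,
`u_{g(i)} ~ N(0,σ₂²)`, `u_{j(ig)} ~ N(0,σ₁²)`, `ε_{igjk} ~ N(0,σ_e²)`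
(formalized through the resulting first- and second-moment structure), the
variance of `δ̂ = (Ȳᵀ_{·1··} − Ȳᶜ_{·1··}) − (Ȳᵀ_{·2··} − Ȳᶜ_{·2··})` equals
`(4/(N₃ n N₁)) (σ_e² + N₁σ₁² + nN₁σ₂²)`. -/
theorem delta_hat_variance {Ω : Type*} [MeasurableSpace Ω]
    (μ : Measure Ω) [IsProbabilityMeasure μ]
    (N₃ n N₁ : ℕ) (hN₃ : 0 < N₃) (hn : 0 < n) (hN₁ : 0 < N₁)
    (β₀ τ ξ δ : ℝ) (σ32 σ22 σ12 σe2 : ℝ)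
    (u : Fin (2 * N₃) → Ω → ℝ) (ug : Fin (2 * N₃) → Fin 2 → Ω → ℝ)
    (uj : Fin (2 * N₃) → Fin 2 → Fin n → Ω → ℝ)
    (eps : Fin (2 * N₃) → Fin 2 → Fin n → Fin N₁ → Ω → ℝ)
    -- zero means
    (hu : ∀ i, Integrable (u i) μ ∧ ∫ ω, u i ω ∂μ = 0)
    (hug : ∀ i g, Integrable (ug i g) μ ∧ ∫ ω, ug i g ω ∂μ = 0)
    (huj : ∀ i g j, Integrable (uj i g j) μ ∧ ∫ ω, uj i g j ω ∂μ = 0)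
    (heps : ∀ i g j k, Integrable (eps i g j k) μ ∧ ∫ ω, eps i g j k ω ∂μ = 0)
    -- second moments within each family
    (h2u : ∀ i i', Integrable (fun ω => u i ω * u i' ω) μ ∧
      ∫ ω, u i ω * u i' ω ∂μ = if i = i' then σ32 else 0)
    (h2ug : ∀ i g i' g', Integrable (fun ω => ug i g ω * ug i' g' ω) μ ∧
      ∫ ω, ug i g ω * ug i' g' ω ∂μ = if i = i' ∧ g = g' then σ22 else 0)
    (h2uj : ∀ i g j i' g' j', Integrable (fun ω => uj i g j ω * uj i' g' j' ω) μ ∧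
      ∫ ω, uj i g j ω * uj i' g' j' ω ∂μ = if i = i' ∧ g = g' ∧ j = j' then σ12 else 0)
    (h2eps : ∀ i g j k i' g' j' k', Integrable (fun ω => eps i g j k ω * eps i' g' j' k' ω) μ ∧
      ∫ ω, eps i g j k ω * eps i' g' j' k' ω ∂μ =
        if i = i' ∧ g = g' ∧ j = j' ∧ k = k' then σe2 else 0)
    -- cross-family second moments vanish (independence)
    (hc1 : ∀ i i' g', Integrable (fun ω => u i ω * ug i' g' ω) μ ∧
      ∫ ω, u i ω * ug i' g' ω ∂μ = 0)
    (hc2 : ∀ i i' g' j', Integrable (fun ω => u i ω * uj i' g' j' ω) μ ∧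
      ∫ ω, u i ω * uj i' g' j' ω ∂μ = 0)
    (hc3 : ∀ i i' g' j' k', Integrable (fun ω => u i ω * eps i' g' j' k' ω) μ ∧
      ∫ ω, u i ω * eps i' g' j' k' ω ∂μ = 0)
    (hc4 : ∀ i g i' g' j', Integrable (fun ω => ug i g ω * uj i' g' j' ω) μ ∧
      ∫ ω, ug i g ω * uj i' g' j' ω ∂μ = 0)
    (hc5 : ∀ i g i' g' j' k', Integrable (fun ω => ug i g ω * eps i' g' j' k' ω) μ ∧
      ∫ ω, ug i g ω * eps i' g' j' k' ω ∂μ = 0)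
    (hc6 : ∀ i g j i' g' j' k', Integrable (fun ω => uj i g j ω * eps i' g' j' k' ω) μ ∧
      ∫ ω, uj i g j ω * eps i' g' j' k' ω ∂μ = 0)
    (L : Fin 2 → ℝ) (hL : L 0 = 1 ∧ L 1 = 0)
    (X : Fin (2 * N₃) → ℝ) (hX : ∀ i, X i = if (i : ℕ) < N₃ then 1 else 0)
    (Y : Fin (2 * N₃) → Fin 2 → Fin n → Fin N₁ → Ω → ℝ)
    (hY : ∀ i g j k ω, Y i g j k ω =
      β₀ + τ * L g + ξ * X i + δ * L g * X i + u i ω + ug i g ω + uj i g j ω + eps i g j k ω)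
    (Ybar : Fin 2 → Bool → Ω → ℝ)
    (hYbar : ∀ g t ω, Ybar g t ω =
      (1 / (N₃ * n * N₁ : ℝ)) * ∑ i : Fin (2 * N₃), ∑ j : Fin n, ∑ k : Fin N₁,
        (if decide ((i : ℕ) < N₃) = t then Y i g j k ω else 0)) :
    ∫ ω, (((Ybar 0 true ω - Ybar 0 false ω) - (Ybar 1 true ω - Ybar 1 false ω)) - δ)^2 ∂μ =
      4 / (N₃ * n * N₁ : ℝ) * (σe2 + N₁ * σ12 + n * N₁ * σ22) := by
  classical
  set c : ℝ := 1 / ((N₃:ℝ) * n * N₁) with hc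
  set s : Fin (2*N₃) → ℝ := fun i => if (i:ℕ) < N₃ then 1 else -1 with hs
  set V : Fin (2*N₃) → Ω → ℝ := fun i ω =>
    ∑ j : Fin n, ∑ k : Fin N₁,
      (ug i 0 ω - ug i 1 ω + (uj i 0 j ω - uj i 1 j ω) + (eps i 0 j k ω - eps i 1 j k ω))
    with hVdef
  -- pointwise identity
  have hnn : ((N₃:ℝ) * n * N₁) ≠ 0 := by
    have h1 : (0:ℝ) < N₃ := by exact_mod_cast hN₃
    have h2 : (0:ℝ) < n := by exact_mod_cast hn
    have h3 : (0:ℝ) < N₁ := by exact_mod_cast hN₁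
    positivity
  have key : ∀ ω, ((Ybar 0 true ω - Ybar 0 false ω) - (Ybar 1 true ω - Ybar 1 false ω)) - δ
      = c * ∑ i, s i * V i ω := by
    intro ω
    have inner : ∀ i : Fin (2*N₃),
        ((∑ j, ∑ k, if decide ((i:ℕ) < N₃) = true then Y i 0 j k ω else 0)
          - (∑ j, ∑ k, if decide ((i:ℕ) < N₃) = false then Y i 0 j k ω else 0)
          - (∑ j, ∑ k, if decide ((i:ℕ) < N₃) = true then Y i 1 j k ω else 0)
          + (∑ j, ∑ k, if decide ((i:ℕ) < N₃) = false then Y i 1 j k ω else 0))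
        = (if (i:ℕ) < N₃ then ((n:ℝ)*(N₁:ℝ))*(τ+δ) else -(((n:ℝ)*(N₁:ℝ))*τ)) + s i * V i ω := by
      intro i
      by_cases hi : (i:ℕ) < N₃
      · have e1 : decide ((i:ℕ) < N₃) = true := by simp [hi]
        have hy : ∀ (j : Fin n) (k : Fin N₁), Y i 0 j k ω - Y i 1 j k ω
            = (τ + δ) + (ug i 0 ω - ug i 1 ω + (uj i 0 j ω - uj i 1 j ω)
                + (eps i 0 j k ω - eps i 1 j k ω)) := by
          intro j k
          rw [hY, hY, hL.1, hL.2, hX, if_pos hi]; ring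
        simp only [e1, hs, hVdef, hi, if_true, decide_true, decide_false,
          Bool.true_eq_false, if_false, Finset.sum_const_zero, sub_zero, add_zero, one_mul]
        rw [← Finset.sum_sub_distrib]
        rw [Finset.sum_congr rfl fun j _ => (Finset.sum_sub_distrib (s := Finset.univ) _ _).symm]
        rw [Finset.sum_congr rfl fun j _ => Finset.sum_congr rfl fun k _ => hy j k]
        rw [Finset.sum_congr rfl fun j _ => Finset.sum_add_distrib, Finset.sum_add_distrib]
        simp [Finset.sum_const, Finset.card_univ, mul_comm, nsmul_eq_mul]
        ring
      · have e1 : decide ((i:ℕ) < N₃) = false := by simp [hi]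
        have hy : ∀ (j : Fin n) (k : Fin N₁), Y i 1 j k ω - Y i 0 j k ω
            = -τ - (ug i 0 ω - ug i 1 ω + (uj i 0 j ω - uj i 1 j ω)
                + (eps i 0 j k ω - eps i 1 j k ω)) := by
          intro j k
          rw [hY, hY, hL.1, hL.2, hX, if_neg hi]; ring
        simp only [e1, hs, hVdef, hi, if_false, decide_true, decide_false,
          Bool.false_eq_true, Finset.sum_const_zero, neg_one_mul, if_true]
        rw [show ∀ A B : ℝ, (0:ℝ) - A - 0 + B = B - A from fun A B => by ring]
        rw [← Finset.sum_sub_distrib]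
        rw [Finset.sum_congr rfl fun j _ => (Finset.sum_sub_distrib (s := Finset.univ) _ _).symm]
        rw [Finset.sum_congr rfl fun j _ => Finset.sum_congr rfl fun k _ => hy j k]
        rw [Finset.sum_congr rfl fun j _ => Finset.sum_sub_distrib _ _, Finset.sum_sub_distrib]
        simp [Finset.sum_const, Finset.card_univ, nsmul_eq_mul]
        ring
    rw [hYbar 0 true ω, hYbar 0 false ω, hYbar 1 true ω, hYbar 1 false ω]
    rw [show ∀ A B C D : ℝ, c*A - c*B - (c*C - c*D) - δ = c*(A - B - C + D) - δ
      from fun A B C D => by ring]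
    rw [← Finset.sum_sub_distrib, ← Finset.sum_sub_distrib, ← Finset.sum_add_distrib]
    rw [Finset.sum_congr rfl fun i _ => inner i, Finset.sum_add_distrib]
    rw [count_ite N₃ (((n:ℝ)*(N₁:ℝ))*(τ+δ)) (-(((n:ℝ)*(N₁:ℝ))*τ))]
    rw [mul_add, hc]
    field_simp
    ring
  -- the sum type for the flattened family
  set e : Fin 2 → ℝ := fun g => if g = 0 then 1 else -1 with he
  set F : Fin (2*N₃) → (Fin 2 ⊕ (Fin 2 × Fin n) ⊕ (Fin 2 × Fin n × Fin N₁)) → Ω → ℝ :=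
    fun i t ω => match t with
      | .inl g => (n*N₁:ℝ) * e g * ug i g ω
      | .inr (.inl (g, j)) => (N₁:ℝ) * e g * uj i g j ω
      | .inr (.inr (g, j, k)) => e g * eps i g j k ω
    with hF
  have hVF : ∀ i ω, V i ω = ∑ t, F i t ω := by
    intro i ω
    simp only [hVdef, hF, he, Fintype.sum_sum_type, Fintype.sum_prod_type, Fin.sum_univ_two]
    simp [Finset.sum_add_distrib, Finset.sum_sub_distrib, Finset.sum_const, Finset.mul_sum,
      Finset.card_univ, mul_sub]
    ring
  -- base integrability
  have hFint : ∀ i i' t t', Integrable (fun ω => F i t ω * F i' t' ω) μ := by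
    rintro i i' (g | ⟨g, j⟩ | ⟨g, j, k⟩) (g' | ⟨g', j'⟩ | ⟨g', j', k'⟩) <;> simp only [hF]
    · rw [show (fun ω => (n:ℝ)*N₁*e g * ug i g ω * ((n:ℝ)*N₁*e g' * ug i' g' ω))
        = fun ω => ((n:ℝ)*N₁*e g * ((n:ℝ)*N₁*e g')) * (ug i g ω * ug i' g' ω)
        from funext fun ω => by ring]
      exact (h2ug i g i' g').1.const_mul _
    · rw [show (fun ω => (n:ℝ)*N₁*e g * ug i g ω * ((N₁:ℝ)*e g' * uj i' g' j' ω))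
        = fun ω => ((n:ℝ)*N₁*e g * ((N₁:ℝ)*e g')) * (ug i g ω * uj i' g' j' ω)
        from funext fun ω => by ring]
      exact (hc4 i g i' g' j').1.const_mul _
    · rw [show (fun ω => (n:ℝ)*N₁*e g * ug i g ω * (e g' * eps i' g' j' k' ω))
        = fun ω => ((n:ℝ)*N₁*e g * e g') * (ug i g ω * eps i' g' j' k' ω)
        from funext fun ω => by ring]
      exact (hc5 i g i' g' j' k').1.const_mul _
    · rw [show (fun ω => (N₁:ℝ)*e g * uj i g j ω * ((n:ℝ)*N₁*e g' * ug i' g' ω))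
        = fun ω => ((N₁:ℝ)*e g * ((n:ℝ)*N₁*e g')) * (ug i' g' ω * uj i g j ω)
        from funext fun ω => by ring]
      exact (hc4 i' g' i g j).1.const_mul _
    · rw [show (fun ω => (N₁:ℝ)*e g * uj i g j ω * ((N₁:ℝ)*e g' * uj i' g' j' ω))
        = fun ω => ((N₁:ℝ)*e g * ((N₁:ℝ)*e g')) * (uj i g j ω * uj i' g' j' ω)
        from funext fun ω => by ring]
      exact (h2uj i g j i' g' j').1.const_mul _
    · rw [show (fun ω => (N₁:ℝ)*e g * uj i g j ω * (e g' * eps i' g' j' k' ω))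
        = fun ω => ((N₁:ℝ)*e g * e g') * (uj i g j ω * eps i' g' j' k' ω)
        from funext fun ω => by ring]
      exact (hc6 i g j i' g' j' k').1.const_mul _
    · rw [show (fun ω => e g * eps i g j k ω * ((n:ℝ)*N₁*e g' * ug i' g' ω))
        = fun ω => (e g * ((n:ℝ)*N₁*e g')) * (ug i' g' ω * eps i g j k ω)
        from funext fun ω => by ring]
      exact (hc5 i' g' i g j k).1.const_mul _
    · rw [show (fun ω => e g * eps i g j k ω * ((N₁:ℝ)*e g' * uj i' g' j' ω))
        = fun ω => (e g * ((N₁:ℝ)*e g')) * (uj i' g' j' ω * eps i g j k ω)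
        from funext fun ω => by ring]
      exact (hc6 i' g' j' i g j k).1.const_mul _
    · rw [show (fun ω => e g * eps i g j k ω * (e g' * eps i' g' j' k' ω))
        = fun ω => (e g * e g') * (eps i g j k ω * eps i' g' j' k' ω)
        from funext fun ω => by ring]
      exact (h2eps i g j k i' g' j' k').1.const_mul _
  -- covariance
  set K : ℝ := 2*((n:ℝ)^2*(N₁:ℝ)^2*σ22 + (n:ℝ)*(N₁:ℝ)^2*σ12 + (n:ℝ)*(N₁:ℝ)*σe2) with hK
  have hcov : ∀ i i', Integrable (fun ω => V i ω * V i' ω) μ ∧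
      ∫ ω, V i ω * V i' ω ∂μ = if i = i' then K else 0 := by
    intro i i'
    have hrw : (fun ω => V i ω * V i' ω) = fun ω => (∑ t, F i t ω) * (∑ t, F i' t ω) := by
      funext ω; rw [hVF, hVF]
    have H := helper_sum_mul μ (F i) (F i') (hFint i i')
    refine ⟨hrw ▸ H.1, ?_⟩
    rw [hrw, H.2]
    have hI : ∀ t t', ∫ ω, F i t ω * F i' t' ω ∂μ = (match t, t' with
      | .inl g, .inl g' =>
          ((n:ℝ)*N₁*e g * ((n:ℝ)*N₁*e g')) * (if i = i' ∧ g = g' then σ22 else 0)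
      | .inr (.inl (g,j)), .inr (.inl (g',j')) =>
          ((N₁:ℝ)*e g * ((N₁:ℝ)*e g')) * (if i = i' ∧ g = g' ∧ j = j' then σ12 else 0)
      | .inr (.inr (g,j,k)), .inr (.inr (g',j',k')) =>
          (e g * e g') * (if i = i' ∧ g = g' ∧ j = j' ∧ k = k' then σe2 else 0)
      | _, _ => 0) := by
      rintro (g | ⟨g,j⟩ | ⟨g,j,k⟩) (g' | ⟨g',j'⟩ | ⟨g',j',k'⟩) <;> simp only [hF]
      · rw [show (fun ω => (n:ℝ)*N₁*e g * ug i g ω * ((n:ℝ)*N₁*e g' * ug i' g' ω))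
          = fun ω => ((n:ℝ)*N₁*e g * ((n:ℝ)*N₁*e g')) * (ug i g ω * ug i' g' ω)
          from funext fun ω => by ring]
        rw [integral_const_mul, (h2ug i g i' g').2]
      · rw [show (fun ω => (n:ℝ)*N₁*e g * ug i g ω * ((N₁:ℝ)*e g' * uj i' g' j' ω))
          = fun ω => ((n:ℝ)*N₁*e g * ((N₁:ℝ)*e g')) * (ug i g ω * uj i' g' j' ω)
          from funext fun ω => by ring]
        rw [integral_const_mul, (hc4 i g i' g' j').2, mul_zero]
      · rw [show (fun ω => (n:ℝ)*N₁*e g * ug i g ω * (e g' * eps i' g' j' k' ω))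
          = fun ω => ((n:ℝ)*N₁*e g * e g') * (ug i g ω * eps i' g' j' k' ω)
          from funext fun ω => by ring]
        rw [integral_const_mul, (hc5 i g i' g' j' k').2, mul_zero]
      · rw [show (fun ω => (N₁:ℝ)*e g * uj i g j ω * ((n:ℝ)*N₁*e g' * ug i' g' ω))
          = fun ω => ((N₁:ℝ)*e g * ((n:ℝ)*N₁*e g')) * (ug i' g' ω * uj i g j ω)
          from funext fun ω => by ring]
        rw [integral_const_mul, (hc4 i' g' i g j).2, mul_zero]
      · rw [show (fun ω => (N₁:ℝ)*e g * uj i g j ω * ((N₁:ℝ)*e g' * uj i' g' j' ω))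
          = fun ω => ((N₁:ℝ)*e g * ((N₁:ℝ)*e g')) * (uj i g j ω * uj i' g' j' ω)
          from funext fun ω => by ring]
        rw [integral_const_mul, (h2uj i g j i' g' j').2]
      · rw [show (fun ω => (N₁:ℝ)*e g * uj i g j ω * (e g' * eps i' g' j' k' ω))
          = fun ω => ((N₁:ℝ)*e g * e g') * (uj i g j ω * eps i' g' j' k' ω)
          from funext fun ω => by ring]
        rw [integral_const_mul, (hc6 i g j i' g' j' k').2, mul_zero]
      · rw [show (fun ω => e g * eps i g j k ω * ((n:ℝ)*N₁*e g' * ug i' g' ω))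
          = fun ω => (e g * ((n:ℝ)*N₁*e g')) * (ug i' g' ω * eps i g j k ω)
          from funext fun ω => by ring]
        rw [integral_const_mul, (hc5 i' g' i g j k).2, mul_zero]
      · rw [show (fun ω => e g * eps i g j k ω * ((N₁:ℝ)*e g' * uj i' g' j' ω))
          = fun ω => (e g * ((N₁:ℝ)*e g')) * (uj i' g' j' ω * eps i g j k ω)
          from funext fun ω => by ring]
        rw [integral_const_mul, (hc6 i' g' j' i g j k).2, mul_zero]
      · rw [show (fun ω => e g * eps i g j k ω * (e g' * eps i' g' j' k' ω))
          = fun ω => (e g * e g') * (eps i g j k ω * eps i' g' j' k' ω)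
          from funext fun ω => by ring]
        rw [integral_const_mul, (h2eps i g j k i' g' j' k').2]
    simp only [hI]
    by_cases hii : i = i'
    · subst hii
      simp only [true_and, if_pos rfl, hK, he]
      rw [if_pos trivial]
      simp only [Fintype.sum_sum_type, Fintype.sum_prod_type, Finset.sum_const_zero,
        Fin.sum_univ_two]
      simp [ite_and, Finset.sum_ite_eq, Finset.sum_ite_eq', Finset.sum_const,
        Finset.card_univ, mul_ite, ite_mul, mul_zero, zero_mul]
      ring
    · simp [hii]
  -- put it together
  have hint2 : ∀ a b, Integrable (fun ω => (s a * V a ω) * (s b * V b ω)) μ := by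
    intro a b
    rw [show (fun ω => (s a * V a ω) * (s b * V b ω))
      = fun ω => (s a * s b) * (V a ω * V b ω) from funext fun ω => by ring]
    exact (hcov a b).1.const_mul _
  have hval : ∀ a b, ∫ ω, (s a * V a ω) * (s b * V b ω) ∂μ
      = s a * s b * (if a = b then K else 0) := by
    intro a b
    rw [show (fun ω => (s a * V a ω) * (s b * V b ω))
      = fun ω => (s a * s b) * (V a ω * V b ω) from funext fun ω => by ring]
    rw [integral_const_mul, (hcov a b).2]
  simp only [key]
  rw [show (fun ω => (c * ∑ i, s i * V i ω)^2)
    = fun ω => c^2 * ((∑ i, s i * V i ω) * (∑ i, s i * V i ω))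
    from funext fun ω => by ring]
  rw [integral_const_mul]
  rw [(helper_sum_mul μ (fun i ω => s i * V i ω) (fun i ω => s i * V i ω) hint2).2]
  simp only [hval]
  have hdiag : ∀ a : Fin (2*N₃), ∑ b : Fin (2*N₃), s a * s b * (if a = b then K else 0)
      = K := by
    intro a
    rw [Finset.sum_eq_single a]
    · have : s a * s a = 1 := by simp only [hs]; split <;> norm_num
      rw [if_pos rfl, this, one_mul]
    · intro b _ hb; rw [if_neg (Ne.symm hb), mul_zero]
    · intro h; exact absurd (Finset.mem_univ a) h
  rw [Finset.sum_congr rfl fun a _ => hdiag a, Finset.sum_const, Finset.card_univ,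
    Fintype.card_fin, nsmul_eq_mul]
  rw [hc, hK]
  have h1 : (0:ℝ) < N₃ := by exact_mod_cast hN₃
  have h2 : (0:ℝ) < n := by exact_mod_cast hn
  have h3 : (0:ℝ) < N₁ := by exact_mod_cast hN₁
  field_simp
  push_cast
  ring
end
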